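/- arXiv:1011.5610 — 4 statements merged into one kernel-verified Lean document; each statement's English description precedes it below -/
import Mathlib

section
/- The function Φ(p) = -∑_{α} b_α log(σ_α² + ∑_{k} g_{kα} p_{kα}) is an exact potential for the game with payoffs u_k(p) = ∑_α b_α log(1 + g_{kα} p_{kα}/(σ_α² + ∑_{ℓ≠k} g_{ℓα} p_{ℓα})): for every user k and any two power allocations p_k, p'_k of user k (keeping p_{-k} fixed), u_k(p_{-k}; p'_k) - u_k(p_{-k}; p_k) = Φ(p_{-k}; p_k) - Φ(p_{-k}; p'_k). -/
/-- Φ is an exact potential for the parallel MAC game: for any user k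
and any two power allocations p_k, p'_k (other users fixed),
u_k(p_{-k};p'_k) - u_k(p_{-k};p_k) = Φ(p_{-k};p_k) - Φ(p_{-k};p'_k). -/
theorem exact_potential {K A : Type*} [Fintype K] [Fintype A] [DecidableEq K]
    (b σ : A → ℝ) (g : K → A → ℝ)
    (hb : ∀ α, 0 < b α) (hσ : ∀ α, 0 < σ α) (hg : ∀ k α, 0 < g k α)
    (u : K → (K → A → ℝ) → ℝ)
    (hu : ∀ k p, u k p = ∑ α, b α * Real.log (1 + g k α * p k α /
        (σ α + ∑ ℓ ∈ Finset.univ.erase k, g ℓ α * p ℓ α)))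
    (Φ : (K → A → ℝ) → ℝ)
    (hΦ : ∀ p, Φ p = -∑ α, b α * Real.log (σ α + ∑ k, g k α * p k α))
    (p : K → A → ℝ) (hp : ∀ k α, 0 ≤ p k α)
    (k : K) (pk pk' : A → ℝ) (hpk : ∀ α, 0 ≤ pk α) (hpk' : ∀ α, 0 ≤ pk' α) :
    u k (Function.update p k pk') - u k (Function.update p k pk)
      = Φ (Function.update p k pk) - Φ (Function.update p k pk') := by
  set S : A → ℝ := fun α => σ α + ∑ ℓ ∈ Finset.univ.erase k, g ℓ α * p ℓ α with hSdef
  have hS0 : ∀ α, 0 < S α := by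
    intro α
    apply add_pos_of_pos_of_nonneg (hσ α)
    exact Finset.sum_nonneg fun ℓ _ => mul_nonneg (hg ℓ α).le (hp ℓ α)
  have hkey : ∀ (q : A → ℝ), (∀ α, 0 ≤ q α) →
      u k (Function.update p k q)
        = (∑ α, b α * Real.log (σ α + ∑ ℓ, g ℓ α * (Function.update p k q) ℓ α))
          - ∑ α, b α * Real.log (S α) := by
    intro q hq
    rw [hu, ← Finset.sum_sub_distrib]
    apply Finset.sum_congr rfl
    intro α _
    have herase : ∀ ℓ ∈ Finset.univ.erase k,
        g ℓ α * (Function.update p k q) ℓ α = g ℓ α * p ℓ α := by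
      intro ℓ hℓ
      rw [Function.update_of_ne (Finset.ne_of_mem_erase hℓ)]
    have hsum : σ α + ∑ ℓ, g ℓ α * (Function.update p k q) ℓ α
        = S α + g k α * q α := by
      rw [← Finset.add_sum_erase _ _ (Finset.mem_univ k),
        Finset.sum_congr rfl herase, Function.update_self, hSdef]
      ring
    have hupdate : ∀ ℓ ∈ Finset.univ.erase k,
        g ℓ α * (Function.update p k q) ℓ α = g ℓ α * p ℓ α := herase
    have h1 : (1 : ℝ) + g k α * q α / S α = (S α + g k α * q α) / S α := by
      field_simp [(hS0 α).ne']
    have hq0 : 0 ≤ g k α * q α := mul_nonneg (hg k α).le (hq α)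
    rw [Finset.sum_congr rfl herase, Function.update_self]
    rw [show (σ α + ∑ ℓ ∈ Finset.univ.erase k, g ℓ α * p ℓ α) = S α from rfl]
    rw [h1, Real.log_div (by have := hS0 α; linarith : S α + g k α * q α ≠ 0) (hS0 α).ne', hsum, mul_sub]
  rw [hkey pk' hpk', hkey pk hpk, hΦ, hΦ]
  ring
end

section
/- Suppose q is a power profile at Nash equilibrium of the parallel MAC game (satisfying the KKT conditions). Then for every user k and every pair of nodes α, β in the support of q_k (i.e., q_{kα} > 0 and q_{kβ} > 0), one has g_{kα}/g_{kβ} = r_α/r_β, where r_α = (σ_α² + ∑_ℓ g_{ℓα} q_{ℓα})/b_α. -/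
/-- At a Nash equilibrium q of the parallel MAC game (characterized by
the KKT conditions), for every user k and nodes α, β in the support of q_k,
g_{kα}/g_{kβ} = r_α/r_β, where r_α = (σ_α² + ∑_ℓ g_{ℓα} q_{ℓα})/b_α. -/
theorem waterfilling_ratio {K A : Type*} [Fintype K] [Fintype A]
    (b σ : A → ℝ) (g : K → A → ℝ) (P : K → ℝ)
    (hb : ∀ α, 0 < b α) (hσ : ∀ α, 0 < σ α) (hg : ∀ k α, 0 < g k α)
    (hP : ∀ k, 0 < P k)
    (q : K → A → ℝ) (hq : ∀ k α, 0 ≤ q k α) (hbudget : ∀ k, ∑ α, q k α = P k)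
    (lam : K → ℝ) (hlam : ∀ k, 0 ≤ lam k)
    (hKKT₁ : ∀ k α, b α * g k α / (σ α + ∑ ℓ, g ℓ α * q ℓ α) ≤ lam k)
    (hKKT₂ : ∀ k α, 0 < q k α →
      b α * g k α / (σ α + ∑ ℓ, g ℓ α * q ℓ α) = lam k)
    (r : A → ℝ) (hr : ∀ α, r α = (σ α + ∑ ℓ, g ℓ α * q ℓ α) / b α)
    (k : K) (α β : A) (hα : 0 < q k α) (hβ : 0 < q k β) :
    g k α / g k β = r α / r β := by
  have hD : ∀ γ : A, 0 < σ γ + ∑ ℓ, g ℓ γ * q ℓ γ := by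
    intro γ
    have : (0:ℝ) ≤ ∑ ℓ, g ℓ γ * q ℓ γ :=
      Finset.sum_nonneg fun ℓ _ => mul_nonneg (hg ℓ γ).le (hq ℓ γ)
    linarith [hσ γ]
  have hrpos : ∀ γ : A, 0 < r γ := fun γ => by
    rw [hr γ]; exact div_pos (hD γ) (hb γ)
  have key : ∀ γ : A, 0 < q k γ → g k γ = lam k * r γ := by
    intro γ hγ
    have h := hKKT₂ k γ hγ
    rw [hr γ]
    rw [div_eq_iff (hD γ).ne'] at h
    rw [mul_div_assoc', eq_div_iff (hb γ).ne']
    linarith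
  rw [key α hα, key β hβ]
  have hlamk : 0 < lam k := by
    have := hKKT₂ k α hα
    have : 0 < b α * g k α / (σ α + ∑ ℓ, g ℓ α * q ℓ α) :=
      div_pos (mul_pos (hb α) (hg k α)) (hD α)
    linarith [hKKT₂ k α hα]
  rw [mul_div_mul_left _ _ hlamk.ne']
end

section
/- Let q ∈ Δ and p(t) be a solution of the replicator dynamics dp_{kα}/dt = p_{kα}(v_{kα}(p) − v_k(p)) with p_{kα}(t) > 0 whenever q_{kα} > 0. Then the Kullback–Leibler divergence H_q(p) = ∑_{k,α} q_{kα} log(q_{kα}/p_{kα}) satisfies dH_q(p(t))/dt = ∑_{k,α} (p_{kα}(t) − q_{kα}) v_{kα}(p(t)). -/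
/-- Along the replicator dynamics, the Kullback–Leibler divergence
H_q(p) = ∑_{k,α} q_{kα} log(q_{kα}/p_{kα}) satisfies
dH_q(p(t))/dt = ∑_{k,α} (p_{kα}(t) − q_{kα}) v_{kα}(p(t)). -/
theorem KL_derivative {K A : Type*} [Fintype K] [Fintype A]
    (P : K → ℝ) (hP : ∀ k, 0 < P k)
    (v : K → A → (K → A → ℝ) → ℝ) (hv : ∀ k α, Continuous (v k α))
    (vbar : K → (K → A → ℝ) → ℝ)
    (hvbar : ∀ k x, vbar k x = (P k)⁻¹ * ∑ β, x k β * v k β x)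
    (q : K → A → ℝ) (hq : ∀ k α, 0 ≤ q k α) (hqsum : ∀ k, ∑ α, q k α = P k)
    (p : ℝ → K → A → ℝ)
    (hmem : ∀ t k α, 0 ≤ p t k α) (hsum : ∀ t k, ∑ α, p t k α = P k)
    (hsupp : ∀ t k α, 0 < q k α → 0 < p t k α)
    (hrep : ∀ t k α, HasDerivAt (fun s => p s k α)
      (p t k α * (v k α (p t) - vbar k (p t))) t)
    (t : ℝ) :
    HasDerivAt (fun s => ∑ k, ∑ α, q k α * Real.log (q k α / p s k α))
      (∑ k, ∑ α, (p t k α - q k α) * v k α (p t)) t := by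
  have key : ∀ k α, HasDerivAt (fun s => q k α * Real.log (q k α / p s k α))
      (q k α * (vbar k (p t) - v k α (p t))) t := by
    intro k α
    rcases eq_or_lt_of_le (hq k α) with h0 | hpos
    · simp only [← h0, zero_mul]
      exact hasDerivAt_const t 0
    · have hppos : ∀ s, 0 < p s k α := fun s => hsupp s k α hpos
      have hlog : ∀ s, Real.log (q k α / p s k α)
          = Real.log (q k α) - Real.log (p s k α) := fun s =>
        Real.log_div (ne_of_gt hpos) (ne_of_gt (hppos s))
      have hd : HasDerivAt (fun s => Real.log (p s k α))
          (p t k α * (v k α (p t) - vbar k (p t)) / p t k α) t :=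
        (hrep t k α).log (ne_of_gt (hppos t))
      have hD := ((hasDerivAt_const t (Real.log (q k α))).sub hd).const_mul (q k α)
      have heq : (fun s => q k α * Real.log (q k α / p s k α))
          = fun y => q k α * (Real.log (q k α) - Real.log (p y k α)) :=
        funext fun s => by rw [hlog s]
      rw [heq]
      refine hD.congr_deriv ?_
      rw [mul_div_cancel_left₀ _ (ne_of_gt (hppos t))]; ring
  have total : HasDerivAt (fun s => ∑ k, ∑ α, q k α * Real.log (q k α / p s k α))
      (∑ k, ∑ α, q k α * (vbar k (p t) - v k α (p t))) t :=
    HasDerivAt.fun_sum fun k _ => HasDerivAt.fun_sum fun α _ => key k α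
  convert total using 1
  refine Finset.sum_congr rfl (fun k _ => ?_)
  have h1 : ∑ α, q k α * (vbar k (p t) - v k α (p t))
      = (∑ α, q k α) * vbar k (p t) - ∑ α, q k α * v k α (p t) := by
    rw [Finset.sum_mul, ← Finset.sum_sub_distrib]
    exact Finset.sum_congr rfl (fun α _ => by ring)
  rw [h1, hqsum, hvbar, mul_inv_cancel_left₀ (ne_of_gt (hP k)),
    ← Finset.sum_sub_distrib]
  exact Finset.sum_congr rfl (fun α _ => by ring)
end

section
/- Let Θ(p, t) be a continuous semiflow on a compact metric space Δ satisfying Θ(p, t+s) = Θ(Θ(p,t), s), and suppose there is a family of continuous functions {H_q}_{q ∈ Q} indexed by a closed set Q ⊆ Δ such that each H_q ≥ 0 vanishes exactly at q, each t ↦ H_q(Θ(p,t)) is nonincreasing, and is strictly decreasing whenever Θ(p,t) ∉ Q. Then every trajectory t ↦ Θ(p,t) for which some H_q(p) is finite converges to a single point of Q. -/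
open Filter Topology
open scoped NNReal ENNReal

set_option maxHeartbeats 1000000 in
/-- Let Θ be a continuous semiflow on a compact metric space Δ, and let
{H_q}_{q∈Q} be a family of Lyapunov-type functions indexed by a closed set Q, each
nonnegative (valued in [0,∞]), vanishing exactly at q, nonincreasing along trajectories,
and strictly decreasing along trajectories outside Q. Then every trajectory starting at
a point where some H_q is finite converges to a single point of Q. -/
theorem semiflow_convergence {Δ : Type*} [MetricSpace Δ] [CompactSpace Δ]
    (Θ : Δ → ℝ≥0 → Δ)
    (hcont : Continuous fun x : Δ × ℝ≥0 => Θ x.1 x.2)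
    (hzero : ∀ p, Θ p 0 = p)
    (hflow : ∀ p (t s : ℝ≥0), Θ p (t + s) = Θ (Θ p t) s)
    (Q : Set Δ) (hQ : IsClosed Q)
    (H : Δ → Δ → ℝ≥0∞)
    (hHcont : ∀ q ∈ Q, Continuous (H q))
    (hH0 : ∀ q ∈ Q, ∀ x, H q x = 0 ↔ x = q)
    (hmono : ∀ q ∈ Q, ∀ p, ∀ s t : ℝ≥0, s ≤ t → H q (Θ p t) ≤ H q (Θ p s))
    (hstrict : ∀ q ∈ Q, ∀ p, ∀ s t : ℝ≥0, s < t → Θ p s ∉ Q →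
      H q (Θ p s) ≠ ⊤ → H q (Θ p t) < H q (Θ p s)) :
    ∀ p : Δ, (∃ q ∈ Q, H q p ≠ ⊤) →
      ∃ q' ∈ Q, Tendsto (fun t => Θ p t) atTop (𝓝 q') := by
  intro p hp
  obtain ⟨q, hqQ, hfin⟩ := hp
  have hffin : ∀ t, H q (Θ p t) ≠ ⊤ := by
    intro t
    have h := hmono q hqQ p 0 t zero_le
    rw [hzero p] at h
    exact ne_top_of_le_ne_top hfin h
  have hanti : Antitone fun t => H q (Θ p t) := fun s t hst => hmono q hqQ p s t hst
  have hLtend : Tendsto (fun t => H q (Θ p t)) atTop (𝓝 (⨅ t, H q (Θ p t))) :=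
    tendsto_atTop_iInf hanti
  set L := ⨅ t, H q (Θ p t) with hLdef
  have hLne : L ≠ ⊤ := ne_top_of_le_ne_top (hffin 0) (iInf_le _ 0)
  obtain ⟨x, -, φ, hφ, hx⟩ := IsCompact.tendsto_subseq (x := fun n : ℕ => Θ p (n : ℝ≥0))
    isCompact_univ (fun n => Set.mem_univ _)
  have htφ : Tendsto (fun n => ((φ n : ℕ) : ℝ≥0)) atTop atTop :=
    tendsto_natCast_atTop_atTop.comp hφ.tendsto_atTop
  -- every point on the trajectory through x has H q value L
  have key : ∀ s : ℝ≥0, H q (Θ x s) = L := by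
    intro s
    have hΘs : Continuous fun y : Δ => Θ y s :=
      hcont.comp (continuous_id.prodMk continuous_const)
    have h1 : Tendsto (fun n => Θ p ((φ n : ℝ≥0) + s)) atTop (𝓝 (Θ x s)) := by
      simp only [hflow]
      exact (hΘs.tendsto x).comp hx
    have h2a : Tendsto (fun n : ℕ => ((φ n : ℝ≥0) + s)) atTop atTop :=
      tendsto_atTop_mono (fun n => le_self_add) htφ
    have h2 : Tendsto (fun n => H q (Θ p ((φ n : ℝ≥0) + s))) atTop (𝓝 L) :=
      hLtend.comp h2a
    have h3 : Tendsto (fun n => H q (Θ p ((φ n : ℝ≥0) + s))) atTop (𝓝 (H q (Θ x s))) :=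
      ((hHcont q hqQ).tendsto _).comp h1
    exact tendsto_nhds_unique h3 h2
  have hxQ : x ∈ Q := by
    by_contra hxQ
    have hnot : Θ x 0 ∉ Q := by rw [hzero]; exact hxQ
    have hne : H q (Θ x 0) ≠ ⊤ := by rw [key 0]; exact hLne
    have := hstrict q hqQ x 0 1 zero_lt_one hnot hne
    rw [key 0, key 1] at this
    exact lt_irrefl _ this
  refine ⟨x, hxQ, ?_⟩
  -- H x along the trajectory tends to 0
  have hgx : Antitone fun t => H x (Θ p t) := fun s t hst => hmono x hxQ p s t hst
  have hgtend : Tendsto (fun t => H x (Θ p t)) atTop (𝓝 (⨅ t, H x (Θ p t))) :=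
    tendsto_atTop_iInf hgx
  have hxx : H x x = 0 := (hH0 x hxQ x).mpr rfl
  have hsub0 : Tendsto (fun n => H x (Θ p ((φ n : ℕ) : ℝ≥0))) atTop (𝓝 0) := by
    rw [← hxx]
    exact ((hHcont x hxQ).tendsto x).comp hx
  have hsubL : Tendsto (fun n => H x (Θ p ((φ n : ℕ) : ℝ≥0))) atTop
      (𝓝 (⨅ t, H x (Θ p t))) := hgtend.comp htφ
  have hinf0 : (⨅ t, H x (Θ p t)) = 0 := tendsto_nhds_unique hsubL hsub0
  rw [hinf0] at hgtend
  -- conclude convergence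
  rw [tendsto_nhds]
  intro U hU hxU
  rcases Set.eq_empty_or_nonempty Uᶜ with hK | hK
  · have hUuniv : U = Set.univ := by
      rw [← compl_compl U, hK, Set.compl_empty]
    filter_upwards with t
    simp [hUuniv]
  · obtain ⟨y₀, hy₀K, hy₀min⟩ :=
      (hU.isClosed_compl.isCompact).exists_isMinOn hK ((hHcont x hxQ).continuousOn)
    have hy₀pos : 0 < H x y₀ := by
      rcases eq_or_ne (H x y₀) 0 with h0 | h0
      · exact absurd ((hH0 x hxQ y₀).mp h0 ▸ hy₀K) (Set.notMem_compl_iff.mpr hxU)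
      · exact pos_iff_ne_zero.mpr h0
    have hev : ∀ᶠ t in atTop, H x (Θ p t) < H x y₀ :=
      hgtend.eventually_lt_const hy₀pos
    filter_upwards [hev] with t ht
    by_contra hmem
    exact absurd (hy₀min (Set.mem_compl hmem)) (not_le.mpr ht)
end
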